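/- For any graph G and any edge e of G, the Staller-start game domination number satisfies |γ_g'(G) − γ_g'(G−e)| ≤ 2. -/
import Mathlib


open Classical

noncomputable section

namespace DomGame

variable {V : Type*} [Fintype V]

/-- Closed neighborhood of `v` as a `Finset`. -/
noncomputable def N (G : SimpleGraph V) (v : V) : Finset V :=
  Finset.univ.filter (fun u => G.Adj v u ∨ u = v)

/-- Legal moves given the set `S` of already dominated vertices. -/
noncomputable def moves (G : SimpleGraph V) (S : Finset V) : Finset V :=
  Finset.univ.filter (fun v => ¬ N G v ⊆ S)

lemma card_lt {G : SimpleGraph V} {S : Finset V} (v : V) (hv : v ∈ moves G S) :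
    (Finset.univ \ (S ∪ N G v)).card < (Finset.univ \ S).card := by
  simp only [moves, Finset.mem_filter] at hv
  obtain ⟨u, hu, hus⟩ := Finset.not_subset.mp hv.2
  apply Finset.card_lt_card
  refine ⟨Finset.sdiff_subset_sdiff (le_refl _) Finset.subset_union_left, ?_⟩
  intro hsub
  have := hsub (Finset.mem_sdiff.mpr ⟨Finset.mem_univ u, hus⟩)
  rw [Finset.mem_sdiff, Finset.mem_union] at this
  exact this.2 (Or.inr hu)

mutual
/-- Number of moves with optimal play when it is Dominator's turn and
`S` is the set of already dominated vertices. -/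
noncomputable def gameD (G : SimpleGraph V) (S : Finset V) : ℕ :=
  if h : (moves G S).Nonempty then
    1 + (moves G S).attach.inf' (by simpa using h)
      (fun v => gameS G (S ∪ N G v.1))
  else 0
termination_by (Finset.univ \ S).card
decreasing_by exact card_lt v.1 v.2

/-- Number of moves with optimal play when it is Staller's turn. -/
noncomputable def gameS (G : SimpleGraph V) (S : Finset V) : ℕ :=
  if h : (moves G S).Nonempty then
    1 + (moves G S).attach.sup' (by simpa using h)
      (fun v => gameD G (S ∪ N G v.1))
  else 0
termination_by (Finset.univ \ S).card
decreasing_by exact card_lt v.1 v.2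
end

/-- The (Dominator-start) game domination number. -/
noncomputable def gammaG (G : SimpleGraph V) : ℕ := gameD G ∅

/-- The Staller-start game domination number. -/
noncomputable def gammaG' (G : SimpleGraph V) : ℕ := gameS G ∅

end DomGame
namespace DomGame

open Finset

variable {V : Type*} [Fintype V]

lemma self_mem_N (H : SimpleGraph V) (v : V) : v ∈ N H v := by simp [N]

lemma mem_moves_iff {H : SimpleGraph V} {S : Finset V} {v : V} :
    v ∈ moves H S ↔ ¬ N H v ⊆ S := by simp [moves]

lemma moves_nonempty (H : SimpleGraph V) {S : Finset V} (hS : S ≠ Finset.univ) :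
    (moves H S).Nonempty := by
  obtain ⟨v, hv⟩ : ∃ v, v ∉ S := by simpa [Finset.eq_univ_iff_forall] using hS
  exact ⟨v, mem_moves_iff.mpr (fun h => hv (h (self_mem_N H v)))⟩

lemma gameD_univ (H : SimpleGraph V) : gameD H (Finset.univ : Finset V) = 0 := by
  rw [gameD]
  have : ¬ (moves H (Finset.univ : Finset V)).Nonempty := by
    simp [moves, Finset.filter_eq_empty_iff, Finset.not_nonempty_iff_eq_empty]
  simp [this]

lemma gameS_univ (H : SimpleGraph V) : gameS H (Finset.univ : Finset V) = 0 := by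
  rw [gameS]
  have : ¬ (moves H (Finset.univ : Finset V)).Nonempty := by
    simp [moves, Finset.filter_eq_empty_iff, Finset.not_nonempty_iff_eq_empty]
  simp [this]

lemma gameD_le {H : SimpleGraph V} {S : Finset V} {v : V} (hv : v ∈ moves H S) :
    gameD H S ≤ 1 + gameS H (S ∪ N H v) := by
  have h : (moves H S).Nonempty := ⟨v, hv⟩
  rw [gameD, dif_pos h]
  have := Finset.inf'_le (s := (moves H S).attach)
    (f := fun w => gameS H (S ∪ N H w.1)) (Finset.mem_attach _ ⟨v, hv⟩)
  exact Nat.add_le_add_left this 1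

lemma gameS_ge {H : SimpleGraph V} {S : Finset V} {v : V} (hv : v ∈ moves H S) :
    1 + gameD H (S ∪ N H v) ≤ gameS H S := by
  have h : (moves H S).Nonempty := ⟨v, hv⟩
  rw [gameS, dif_pos h]
  have := Finset.le_sup' (s := (moves H S).attach)
    (f := fun w => gameD H (S ∪ N H w.1)) (Finset.mem_attach _ ⟨v, hv⟩)
  exact Nat.add_le_add_left this 1

lemma exists_gameD {H : SimpleGraph V} {S : Finset V} (h : (moves H S).Nonempty) :
    ∃ v ∈ moves H S, gameD H S = 1 + gameS H (S ∪ N H v) := by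
  rw [gameD, dif_pos h]
  obtain ⟨w, -, hw⟩ := Finset.exists_mem_eq_inf' (s := (moves H S).attach)
    (by simpa using h) (fun w => gameS H (S ∪ N H w.1))
  exact ⟨w.1, w.2, by rw [hw]⟩

lemma exists_gameS {H : SimpleGraph V} {S : Finset V} (h : (moves H S).Nonempty) :
    ∃ v ∈ moves H S, gameS H S = 1 + gameD H (S ∪ N H v) := by
  rw [gameS, dif_pos h]
  obtain ⟨w, -, hw⟩ := Finset.exists_mem_eq_sup' (s := (moves H S).attach)
    (by simpa using h) (fun w => gameD H (S ∪ N H w.1))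
  exact ⟨w.1, w.2, by rw [hw]⟩

end DomGame
namespace DomGame

variable {V : Type*} [Fintype V]

lemma game_le_card (H : SimpleGraph V) :
    ∀ n (S : Finset V), (Finset.univ \ S).card ≤ n →
      gameD H S ≤ (Finset.univ \ S).card ∧ gameS H S ≤ (Finset.univ \ S).card := by
  intro n
  induction n with
  | zero =>
    intro S hS
    have hSu : S = Finset.univ := by
      have : Finset.univ \ S = ∅ := Finset.card_eq_zero.mp (Nat.le_zero.mp hS)
      have := Finset.sdiff_eq_empty_iff_subset.mp this
      exact le_antisymm (Finset.subset_univ S) this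
    subst hSu
    simp [gameD_univ, gameS_univ]
  | succ n ih =>
    intro S hS
    by_cases hSu : S = Finset.univ
    · subst hSu; simp [gameD_univ, gameS_univ]
    · constructor
      · obtain ⟨v, hv, heq⟩ := exists_gameD (moves_nonempty H hSu)
        have hlt := card_lt v hv
        have := (ih (S ∪ N H v) (by omega)).2
        omega
      · obtain ⟨v, hv, heq⟩ := exists_gameS (moves_nonempty H hSu)
        have hlt := card_lt v hv
        have := (ih (S ∪ N H v) (by omega)).1
        omega

lemma continuation (H : SimpleGraph V) :
    ∀ n (S T : Finset V), S ⊆ T → (Finset.univ \ S).card ≤ n →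
      gameD H T ≤ gameD H S ∧ gameS H T ≤ gameS H S := by
  intro n
  induction n with
  | zero =>
    intro S T hST hS
    have hSu : S = Finset.univ := by
      have : Finset.univ \ S = ∅ := Finset.card_eq_zero.mp (Nat.le_zero.mp hS)
      exact le_antisymm (Finset.subset_univ S) (Finset.sdiff_eq_empty_iff_subset.mp this)
    have hTu : T = Finset.univ := le_antisymm (Finset.subset_univ T) (hSu ▸ hST)
    subst hSu; subst hTu
    simp
  | succ n ih =>
    intro S T hST hS
    by_cases hTu : T = Finset.univ
    · subst hTu; simp [gameD_univ, gameS_univ]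
    · have hSu : S ≠ Finset.univ := fun h => hTu (le_antisymm (Finset.subset_univ T) (h ▸ hST))
      constructor
      · -- Dominator
        obtain ⟨v, hv, heq⟩ := exists_gameD (moves_nonempty H hSu)
        have hlt := card_lt v hv
        by_cases hvT : v ∈ moves H T
        · have h1 := gameD_le hvT
          have h2 := (ih (S ∪ N H v) (T ∪ N H v)
            (Finset.union_subset_union hST (le_refl _)) (by omega)).2
          omega
        · -- N H v ⊆ T
          have hNv : N H v ⊆ T := not_not.mp (fun h => hvT (mem_moves_iff.mpr h))
          obtain ⟨w, hw⟩ := moves_nonempty H hTu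
          have h1 := gameD_le hw
          have h2 := (ih (S ∪ N H v) (T ∪ N H w)
            (Finset.union_subset (hST.trans Finset.subset_union_left)
              (hNv.trans Finset.subset_union_left)) (by omega)).2
          omega
      · -- Staller
        obtain ⟨v, hv, heq⟩ := exists_gameS (moves_nonempty H hTu)
        have hvS : v ∈ moves H S :=
          mem_moves_iff.mpr (fun h => mem_moves_iff.mp hv (h.trans hST))
        have hlt := card_lt v hvS
        have h1 := gameS_ge hvS
        have h2 := (ih (S ∪ N H v) (T ∪ N H v)
          (Finset.union_subset_union hST (le_refl _)) (by omega)).1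
        omega

lemma cont_D {H : SimpleGraph V} {S T : Finset V} (hST : S ⊆ T) : gameD H T ≤ gameD H S :=
  (continuation H _ S T hST (le_refl _)).1

lemma cont_S {H : SimpleGraph V} {S T : Finset V} (hST : S ⊆ T) : gameS H T ≤ gameS H S :=
  (continuation H _ S T hST (le_refl _)).2

lemma gameD_le_gameS (H : SimpleGraph V) (S : Finset V) : gameD H S ≤ gameS H S + 1 := by
  by_cases hSu : S = Finset.univ
  · subst hSu; simp [gameD_univ, gameS_univ]
  · obtain ⟨v, hv, heq⟩ := exists_gameD (moves_nonempty H hSu)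
    have := cont_S (H := H) (Finset.subset_union_left (s₁ := S) (s₂ := N H v))
    omega

lemma gameS_le_gameD (H : SimpleGraph V) (S : Finset V) : gameS H S ≤ gameD H S + 1 := by
  by_cases hSu : S = Finset.univ
  · subst hSu; simp [gameD_univ, gameS_univ]
  · obtain ⟨v, hv, heq⟩ := exists_gameS (moves_nonempty H hSu)
    have := cont_D (H := H) (Finset.subset_union_left (s₁ := S) (s₂ := N H v))
    omega

end DomGame
namespace DomGame

variable {V : Type*} [Fintype V]

lemma N_del_subset (G : SimpleGraph V) (E : Set (Sym2 V)) (v : V) :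
    N (G.deleteEdges E) v ⊆ N G v := by
  intro u hu
  simp only [N, Finset.mem_filter, SimpleGraph.deleteEdges_adj] at hu ⊢
  tauto

lemma N_diff {G : SimpleGraph V} {a b v u : V}
    (hu : u ∈ N G v) (hu' : u ∉ N (G.deleteEdges {s(a,b)}) v) :
    (v = a ∧ u = b) ∨ (v = b ∧ u = a) := by
  simp only [N, Finset.mem_filter, SimpleGraph.deleteEdges_adj, Finset.mem_univ,
    true_and, Set.mem_singleton_iff, not_or, not_and, not_not] at hu hu'
  rcases hu with h | h
  · have := hu'.1 h
    rw [Sym2.eq_iff] at this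
    tauto
  · exact absurd h hu'.2

end DomGame
namespace DomGame

variable {V : Type*} [Fintype V]

lemma union_N_del {G : SimpleGraph V} {a b : V} {S : Finset V}
    (ha : a ∈ S) (hb : b ∈ S) (v : V) :
    S ∪ N (G.deleteEdges {s(a,b)}) v = S ∪ N G v := by
  apply le_antisymm
  · exact Finset.union_subset_union (le_refl _) (N_del_subset G _ v)
  · intro u hu
    rcases Finset.mem_union.mp hu with h | h
    · exact Finset.mem_union_left _ h
    · by_cases h' : u ∈ N (G.deleteEdges {s(a,b)}) v
      · exact Finset.mem_union_right _ h'
      · rcases N_diff h h' with ⟨-, rfl⟩ | ⟨-, rfl⟩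
        · exact Finset.mem_union_left _ hb
        · exact Finset.mem_union_left _ ha

lemma moves_del {G : SimpleGraph V} {a b : V} {S : Finset V}
    (ha : a ∈ S) (hb : b ∈ S) :
    moves (G.deleteEdges {s(a,b)}) S = moves G S := by
  ext v
  simp only [mem_moves_iff]
  constructor
  · intro h hsub
    exact h ((N_del_subset G _ v).trans hsub)
  · intro h hsub
    apply h
    intro u hu
    by_cases h' : u ∈ N (G.deleteEdges {s(a,b)}) v
    · exact hsub h'
    · rcases N_diff hu h' with ⟨-, rfl⟩ | ⟨-, rfl⟩
      · exact hb
      · exact ha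

lemma eq_of_dominated {G : SimpleGraph V} {a b : V} :
    ∀ n (S : Finset V), a ∈ S → b ∈ S → (Finset.univ \ S).card ≤ n →
      gameD (G.deleteEdges {s(a,b)}) S = gameD G S ∧
      gameS (G.deleteEdges {s(a,b)}) S = gameS G S := by
  intro n
  induction n with
  | zero =>
    intro S ha hb hS
    have hSu : S = Finset.univ := by
      have : Finset.univ \ S = ∅ := Finset.card_eq_zero.mp (Nat.le_zero.mp hS)
      exact le_antisymm (Finset.subset_univ S) (Finset.sdiff_eq_empty_iff_subset.mp this)
    subst hSu
    simp [gameD_univ, gameS_univ]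
  | succ n ih =>
    intro S ha hb hS
    by_cases hSu : S = Finset.univ
    · subst hSu; simp [gameD_univ, gameS_univ]
    · constructor
      · apply le_antisymm
        · obtain ⟨v, hv, heq⟩ := exists_gameD (moves_nonempty G hSu)
          have hlt := card_lt v hv
          have hv' : v ∈ moves (G.deleteEdges {s(a,b)}) S := (moves_del ha hb).symm ▸ hv
          have h1 := gameD_le hv'
          rw [union_N_del ha hb v] at h1
          have h2 := (ih (S ∪ N G v) (Finset.mem_union_left _ ha)
            (Finset.mem_union_left _ hb) (by omega)).2
          omega
        · obtain ⟨v, hv', heq⟩ := exists_gameD (moves_nonempty (G.deleteEdges {s(a,b)}) hSu)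
          have hv : v ∈ moves G S := (moves_del ha hb) ▸ hv'
          have hlt := card_lt v hv
          rw [union_N_del ha hb v] at heq
          have h1 := gameD_le hv
          have h2 := (ih (S ∪ N G v) (Finset.mem_union_left _ ha)
            (Finset.mem_union_left _ hb) (by omega)).2
          omega
      · apply le_antisymm
        · obtain ⟨v, hv', heq⟩ := exists_gameS (moves_nonempty (G.deleteEdges {s(a,b)}) hSu)
          have hv : v ∈ moves G S := (moves_del ha hb) ▸ hv'
          have hlt := card_lt v hv
          rw [union_N_del ha hb v] at heq
          have h1 := gameS_ge hv
          have h2 := (ih (S ∪ N G v) (Finset.mem_union_left _ ha)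
            (Finset.mem_union_left _ hb) (by omega)).1
          omega
        · obtain ⟨v, hv, heq⟩ := exists_gameS (moves_nonempty G hSu)
          have hlt := card_lt v hv
          have hv' : v ∈ moves (G.deleteEdges {s(a,b)}) S := (moves_del ha hb).symm ▸ hv
          have h1 := gameS_ge hv'
          rw [union_N_del ha hb v] at h1
          have h2 := (ih (S ∪ N G v) (Finset.mem_union_left _ ha)
            (Finset.mem_union_left _ hb) (by omega)).1
          omega

end DomGame
namespace DomGame

variable {V : Type*} [Fintype V]

lemma mem_N_of_adj {G : SimpleGraph V} {v u : V} (h : G.Adj v u) : u ∈ N G v := by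
  simp only [N, Finset.mem_filter, Finset.mem_univ, true_and]
  exact Or.inl h

/-- Invariant preservation for `key1` (Q*-invariant, lagging real set `S'`). -/
lemma inv_step1 {G : SimpleGraph V} {a b : V} (hne : a ≠ b) {S S' : Finset V} (v : V)
    (hsub : S' ⊆ S) (hlag : ∀ x ∈ S \ S', x = a ∨ x = b)
    (hQb : b ∈ S → b ∉ S' → a ∈ S') (hQa : a ∈ S → a ∉ S' → b ∈ S') :
    S' ∪ N (G.deleteEdges {s(a,b)}) v ⊆ S ∪ N G v ∧
    (∀ x ∈ (S ∪ N G v) \ (S' ∪ N (G.deleteEdges {s(a,b)}) v), x = a ∨ x = b) ∧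
    (b ∈ S ∪ N G v → b ∉ S' ∪ N (G.deleteEdges {s(a,b)}) v →
      a ∈ S' ∪ N (G.deleteEdges {s(a,b)}) v) ∧
    (a ∈ S ∪ N G v → a ∉ S' ∪ N (G.deleteEdges {s(a,b)}) v →
      b ∈ S' ∪ N (G.deleteEdges {s(a,b)}) v) := by
  refine ⟨Finset.union_subset_union hsub (N_del_subset G _ v), ?_, ?_, ?_⟩
  · intro x hx
    rw [Finset.mem_sdiff, Finset.mem_union, Finset.mem_union, not_or] at hx
    obtain ⟨hx1, hx2, hx3⟩ := hx
    rcases hx1 with hxS | hxN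
    · exact hlag x (Finset.mem_sdiff.mpr ⟨hxS, hx2⟩)
    · rcases N_diff hxN hx3 with ⟨-, h⟩ | ⟨-, h⟩
      · exact Or.inr h
      · exact Or.inl h
  · intro hb hb'
    rw [Finset.mem_union, not_or] at hb'
    rw [Finset.mem_union]
    rcases Finset.mem_union.mp hb with hbS | hbN
    · exact Or.inl (hQb hbS hb'.1)
    · rcases N_diff hbN hb'.2 with ⟨h1, -⟩ | ⟨-, h⟩
      · exact Or.inr (by rw [h1]; exact self_mem_N _ a)
      · exact absurd h.symm hne
  · intro ha ha'
    rw [Finset.mem_union, not_or] at ha'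
    rw [Finset.mem_union]
    rcases Finset.mem_union.mp ha with haS | haN
    · exact Or.inl (hQa haS ha'.1)
    · rcases N_diff haN ha'.2 with ⟨-, h⟩ | ⟨h1, -⟩
      · exact absurd h hne
      · exact Or.inr (by rw [h1]; exact self_mem_N _ b)

lemma key1 {G : SimpleGraph V} {a b : V} (hab : G.Adj a b) :
    ∀ n (S S' : Finset V), S' ⊆ S → (∀ x ∈ S \ S', x = a ∨ x = b) →
      (b ∈ S → b ∉ S' → a ∈ S') → (a ∈ S → a ∉ S' → b ∈ S') →
      (Finset.univ \ S').card ≤ n →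
      gameD (G.deleteEdges {s(a,b)}) S' ≤ gameD G S + 2 ∧
      gameS (G.deleteEdges {s(a,b)}) S' ≤ gameS G S + 2 := by
  have hne : a ≠ b := hab.ne
  intro n
  induction n with
  | zero =>
    intro S S' hsub hlag hQb hQa hcard
    have hS'u : S' = Finset.univ := by
      have : Finset.univ \ S' = ∅ := Finset.card_eq_zero.mp (Nat.le_zero.mp hcard)
      exact le_antisymm (Finset.subset_univ S') (Finset.sdiff_eq_empty_iff_subset.mp this)
    have hSu : S = Finset.univ := le_antisymm (Finset.subset_univ S) (hS'u ▸ hsub)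
    subst hS'u; subst hSu
    simp [gameD_univ, gameS_univ]
  | succ n ih =>
    intro S S' hsub hlag hQb hQa hcard
    constructor
    · -- Dominator's turn
      by_cases hS'u : S' = Finset.univ
      · subst hS'u; simp [gameD_univ]
      by_cases hSu : S = Finset.univ
      · -- imagined game over; at most 2 vertices undominated in real game
        have hsub2 : Finset.univ \ S' ⊆ {a, b} := by
          intro x hx
          rw [Finset.mem_sdiff] at hx
          have := hlag x (Finset.mem_sdiff.mpr ⟨hSu ▸ Finset.mem_univ x, hx.2⟩)
          simpa [Finset.mem_insert] using this
        have h1 := (game_le_card (G.deleteEdges {s(a,b)}) _ S' (le_refl _)).1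
        have h2 : (Finset.univ \ S').card ≤ 2 := by
          calc (Finset.univ \ S').card ≤ ({a, b} : Finset V).card := Finset.card_le_card hsub2
          _ ≤ 2 := Finset.card_insert_le _ _ |>.trans (by simp)
        omega
      -- imagined Dominator's optimal move w
      obtain ⟨w, hw, heq⟩ := exists_gameD (moves_nonempty G hSu)
      by_cases hwre : w ∈ moves (G.deleteEdges {s(a,b)}) S'
      · -- synced move
        have hlt := card_lt w hwre
        obtain ⟨i1, i2, i3, i4⟩ := inv_step1 (G := G) hne w hsub hlag hQb hQa
        have h1 := gameD_le hwre
        have h2 := (ih (S ∪ N G w) (S' ∪ N (G.deleteEdges {s(a,b)}) w) i1 i2 i3 i4 (by omega)).2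
        omega
      · -- w dominates nothing new in the real game: cheap-move collapse
        have hN'w : N (G.deleteEdges {s(a,b)}) w ⊆ S' :=
          not_not.mp (fun h => hwre (mem_moves_iff.mpr h))
        obtain ⟨u, huN, huS⟩ := Finset.not_subset.mp (mem_moves_iff.mp hw)
        have huS' : u ∉ S' := fun h => huS (hsub h)
        have huN' : u ∉ N (G.deleteEdges {s(a,b)}) w := fun h => huS' (hN'w h)
        rcases N_diff huN huN' with ⟨hw1, hu1⟩ | ⟨hw1, hu1⟩
        · -- w = a, u = b ; after subst: a is w, b is u
          subst hw1; subst hu1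
          have haS' : w ∈ S' := hN'w (self_mem_N _ w)
          have haS : w ∈ S := hsub haS'
          have hNa : S ∪ N G w = S ∪ {u} := by
            apply le_antisymm
            · intro x hx
              rcases Finset.mem_union.mp hx with h | h
              · exact Finset.mem_union_left _ h
              · by_cases h' : x ∈ N (G.deleteEdges {s(w,u)}) w
                · exact Finset.mem_union_left _ (hsub (hN'w h'))
                · rcases N_diff h h' with ⟨-, h2⟩ | ⟨h2, -⟩
                  · exact Finset.mem_union_right _ (by simp [h2])
                  · exact absurd h2 hne
            · exact Finset.union_subset Finset.subset_union_left
                (Finset.singleton_subset_iff.mpr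
                  (Finset.mem_union_right _ (mem_N_of_adj hab)))
          have hSS' : S' = S := by
            apply le_antisymm hsub
            intro x hx
            by_cases hx' : x ∈ S'
            · exact hx'
            · rcases hlag x (Finset.mem_sdiff.mpr ⟨hx, hx'⟩) with rfl | rfl
              · exact haS'
              · exact absurd hx huS
          subst hSS'
          have hbmv : u ∈ moves (G.deleteEdges {s(w,u)}) S' :=
            mem_moves_iff.mpr (fun h => huS (h (self_mem_N _ u)))
          have h1 := gameD_le hbmv
          have h2 : gameS (G.deleteEdges {s(w,u)}) (S' ∪ N (G.deleteEdges {s(w,u)}) u) ≤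
              gameS (G.deleteEdges {s(w,u)}) (S' ∪ {u}) :=
            cont_S (Finset.union_subset_union (le_refl _)
              (Finset.singleton_subset_iff.mpr (self_mem_N _ u)))
          have h3 : gameS (G.deleteEdges {s(w,u)}) (S' ∪ {u}) = gameS G (S' ∪ {u}) :=
            (eq_of_dominated _ _ (Finset.mem_union_left _ haS)
              (Finset.mem_union_right _ (by simp)) (le_refl _)).2
          rw [hNa] at heq
          omega
        · -- w = b, u = a ; after subst: b is w, a is u
          subst hw1; subst hu1
          have hbS' : w ∈ S' := hN'w (self_mem_N _ w)
          have hbS : w ∈ S := hsub hbS'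
          have hNb : S ∪ N G w = S ∪ {u} := by
            apply le_antisymm
            · intro x hx
              rcases Finset.mem_union.mp hx with h | h
              · exact Finset.mem_union_left _ h
              · by_cases h' : x ∈ N (G.deleteEdges {s(u,w)}) w
                · exact Finset.mem_union_left _ (hsub (hN'w h'))
                · rcases N_diff h h' with ⟨h2, -⟩ | ⟨-, h2⟩
                  · exact absurd h2.symm hne
                  · exact Finset.mem_union_right _ (by simp [h2])
            · exact Finset.union_subset Finset.subset_union_left
                (Finset.singleton_subset_iff.mpr
                  (Finset.mem_union_right _ (mem_N_of_adj hab.symm)))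
          have hSS' : S' = S := by
            apply le_antisymm hsub
            intro x hx
            by_cases hx' : x ∈ S'
            · exact hx'
            · rcases hlag x (Finset.mem_sdiff.mpr ⟨hx, hx'⟩) with rfl | rfl
              · exact absurd hx huS
              · exact hbS'
          subst hSS'
          have hamv : u ∈ moves (G.deleteEdges {s(u,w)}) S' :=
            mem_moves_iff.mpr (fun h => huS (h (self_mem_N _ u)))
          have h1 := gameD_le hamv
          have h2 : gameS (G.deleteEdges {s(u,w)}) (S' ∪ N (G.deleteEdges {s(u,w)}) u) ≤
              gameS (G.deleteEdges {s(u,w)}) (S' ∪ {u}) :=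
            cont_S (Finset.union_subset_union (le_refl _)
              (Finset.singleton_subset_iff.mpr (self_mem_N _ u)))
          have h3 : gameS (G.deleteEdges {s(u,w)}) (S' ∪ {u}) = gameS G (S' ∪ {u}) :=
            (eq_of_dominated _ _ (Finset.mem_union_right _ (by simp))
              (Finset.mem_union_left _ hbS) (le_refl _)).2
          rw [hNb] at heq
          omega
    · -- Staller's turn
      by_cases hS'u : S' = Finset.univ
      · subst hS'u; simp [gameS_univ]
      obtain ⟨v, hv', heq⟩ := exists_gameS (moves_nonempty (G.deleteEdges {s(a,b)}) hS'u)
      have hlt := card_lt v hv'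
      by_cases hvim : v ∈ moves G S
      · have h1 := gameS_ge hvim
        obtain ⟨i1, i2, i3, i4⟩ := inv_step1 (G := G) hne v hsub hlag hQb hQa
        have h2 := (ih (S ∪ N G v) (S' ∪ N (G.deleteEdges {s(a,b)}) v) i1 i2 i3 i4 (by omega)).1
        omega
      · -- Staller's real move only catches up: collapse
        have hNv : N G v ⊆ S := not_not.mp (fun h => hvim (mem_moves_iff.mpr h))
        obtain ⟨u, huN', huS'⟩ := Finset.not_subset.mp (mem_moves_iff.mp hv')
        have huS : u ∈ S := hNv (N_del_subset _ _ _ huN')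
        have habS : a ∈ S ∧ b ∈ S := by
          rcases hlag u (Finset.mem_sdiff.mpr ⟨huS, huS'⟩) with hua | hub
          · exact ⟨hua ▸ huS, hsub (hQa (hua ▸ huS) (hua ▸ huS'))⟩
          · exact ⟨hsub (hQb (hub ▸ huS) (hub ▸ huS')), hub ▸ huS⟩
        have hSeq : S' ∪ N (G.deleteEdges {s(a,b)}) v = S := by
          apply le_antisymm
          · exact Finset.union_subset hsub ((N_del_subset _ _ _).trans hNv)
          · intro x hx
            by_cases hx' : x ∈ S'
            · exact Finset.mem_union_left _ hx'
            · by_cases hxu : x = u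
              · exact hxu ▸ Finset.mem_union_right _ huN'
              · exfalso
                rcases hlag x (Finset.mem_sdiff.mpr ⟨hx, hx'⟩) with hxa | hxb <;>
                  rcases hlag u (Finset.mem_sdiff.mpr ⟨huS, huS'⟩) with hua | hub
                · exact hxu (hxa.trans hua.symm)
                · exact (hxa ▸ hx' : a ∉ S') (hQb (hub ▸ huS) (hub ▸ huS'))
                · exact (hua ▸ huS' : a ∉ S') (hQb (hxb ▸ hx) (hxb ▸ hx'))
                · exact hxu (hxb.trans hub.symm)
        rw [hSeq] at heq
        have h3 : gameD (G.deleteEdges {s(a,b)}) S = gameD G S :=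
          (eq_of_dominated _ S habS.1 habS.2 (le_refl _)).1
        have h4 := gameD_le_gameS G S
        omega

end DomGame
namespace DomGame

variable {V : Type*} [Fintype V]

/-- Invariant preservation for `key2` (P*-invariant, leading real set `S`). -/
lemma inv_step2 {G : SimpleGraph V} {a b : V} (hne : a ≠ b) {S S' : Finset V} (v : V)
    (hsub : S' ⊆ S) (hlag : ∀ x ∈ S \ S', x = a ∨ x = b)
    (hPb : b ∈ S → b ∉ S' → a ∈ S) (hPa : a ∈ S → a ∉ S' → b ∈ S) :
    S' ∪ N (G.deleteEdges {s(a,b)}) v ⊆ S ∪ N G v ∧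
    (∀ x ∈ (S ∪ N G v) \ (S' ∪ N (G.deleteEdges {s(a,b)}) v), x = a ∨ x = b) ∧
    (b ∈ S ∪ N G v → b ∉ S' ∪ N (G.deleteEdges {s(a,b)}) v → a ∈ S ∪ N G v) ∧
    (a ∈ S ∪ N G v → a ∉ S' ∪ N (G.deleteEdges {s(a,b)}) v → b ∈ S ∪ N G v) := by
  refine ⟨Finset.union_subset_union hsub (N_del_subset G _ v), ?_, ?_, ?_⟩
  · intro x hx
    rw [Finset.mem_sdiff, Finset.mem_union, Finset.mem_union, not_or] at hx
    obtain ⟨hx1, hx2, hx3⟩ := hx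
    rcases hx1 with hxS | hxN
    · exact hlag x (Finset.mem_sdiff.mpr ⟨hxS, hx2⟩)
    · rcases N_diff hxN hx3 with ⟨-, h⟩ | ⟨-, h⟩
      · exact Or.inr h
      · exact Or.inl h
  · intro hb hb'
    rw [Finset.mem_union, not_or] at hb'
    rw [Finset.mem_union]
    rcases Finset.mem_union.mp hb with hbS | hbN
    · exact Or.inl (hPb hbS hb'.1)
    · rcases N_diff hbN hb'.2 with ⟨h1, -⟩ | ⟨-, h⟩
      · exact Or.inr (by rw [h1]; exact self_mem_N _ a)
      · exact absurd h.symm hne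
  · intro ha ha'
    rw [Finset.mem_union, not_or] at ha'
    rw [Finset.mem_union]
    rcases Finset.mem_union.mp ha with haS | haN
    · exact Or.inl (hPa haS ha'.1)
    · rcases N_diff haN ha'.2 with ⟨-, h⟩ | ⟨h1, -⟩
      · exact absurd h hne
      · exact Or.inr (by rw [h1]; exact self_mem_N _ b)

lemma key2 {G : SimpleGraph V} {a b : V} (hab : G.Adj a b) :
    ∀ n (S S' : Finset V), S' ⊆ S → (∀ x ∈ S \ S', x = a ∨ x = b) →
      (b ∈ S → b ∉ S' → a ∈ S) → (a ∈ S → a ∉ S' → b ∈ S) →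
      (Finset.univ \ S).card ≤ n →
      gameD G S ≤ gameD (G.deleteEdges {s(a,b)}) S' + 2 ∧
      gameS G S ≤ gameS (G.deleteEdges {s(a,b)}) S' + 2 := by
  have hne : a ≠ b := hab.ne
  intro n
  induction n with
  | zero =>
    intro S S' hsub hlag hPb hPa hcard
    have hSu : S = Finset.univ := by
      have : Finset.univ \ S = ∅ := Finset.card_eq_zero.mp (Nat.le_zero.mp hcard)
      exact le_antisymm (Finset.subset_univ S) (Finset.sdiff_eq_empty_iff_subset.mp this)
    subst hSu
    simp [gameD_univ, gameS_univ]
  | succ n ih =>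
    intro S S' hsub hlag hPb hPa hcard
    constructor
    · -- Dominator's turn
      by_cases hSu : S = Finset.univ
      · subst hSu; simp [gameD_univ]
      by_cases hdom : a ∈ S ∧ b ∈ S
      · have h1 : gameD G S = gameD (G.deleteEdges {s(a,b)}) S :=
          ((eq_of_dominated _ S hdom.1 hdom.2 (le_refl _)).1).symm
        have h2 : gameD (G.deleteEdges {s(a,b)}) S ≤ gameD (G.deleteEdges {s(a,b)}) S' :=
          cont_D hsub
        omega
      · have hS'u : S' ≠ Finset.univ := fun h =>
          hSu (le_antisymm (Finset.subset_univ S) (h ▸ hsub))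
        obtain ⟨w, hw, heq⟩ := exists_gameD (moves_nonempty (G.deleteEdges {s(a,b)}) hS'u)
        have hwre : w ∈ moves G S := by
          by_contra h
          have hNw : N G w ⊆ S := not_not.mp (fun h' => h (mem_moves_iff.mpr h'))
          obtain ⟨u, huN', huS'⟩ := Finset.not_subset.mp (mem_moves_iff.mp hw)
          have huS : u ∈ S := hNw (N_del_subset _ _ _ huN')
          rcases hlag u (Finset.mem_sdiff.mpr ⟨huS, huS'⟩) with hua | hub
          · exact hdom ⟨hua ▸ huS, hPa (hua ▸ huS) (hua ▸ huS')⟩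
          · exact hdom ⟨hPb (hub ▸ huS) (hub ▸ huS'), hub ▸ huS⟩
        have hlt := card_lt w hwre
        have h1 := gameD_le hwre
        obtain ⟨i1, i2, i3, i4⟩ := inv_step2 (G := G) hne w hsub hlag hPb hPa
        have h2 := (ih (S ∪ N G w) (S' ∪ N (G.deleteEdges {s(a,b)}) w) i1 i2 i3 i4 (by omega)).2
        omega
    · -- Staller's turn
      by_cases hSu : S = Finset.univ
      · subst hSu; simp [gameS_univ]
      obtain ⟨v, hv, heq⟩ := exists_gameS (moves_nonempty G hSu)
      have hlt := card_lt v hv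
      by_cases hvim : v ∈ moves (G.deleteEdges {s(a,b)}) S'
      · have h1 := gameS_ge hvim
        obtain ⟨i1, i2, i3, i4⟩ := inv_step2 (G := G) hne v hsub hlag hPb hPa
        have h2 := (ih (S ∪ N G v) (S' ∪ N (G.deleteEdges {s(a,b)}) v) i1 i2 i3 i4 (by omega)).1
        omega
      · -- Staller's real move is a cheap move: collapse
        have hN'v : N (G.deleteEdges {s(a,b)}) v ⊆ S' :=
          not_not.mp (fun h => hvim (mem_moves_iff.mpr h))
        obtain ⟨u, huN, huS⟩ := Finset.not_subset.mp (mem_moves_iff.mp hv)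
        have huS' : u ∉ S' := fun h => huS (hsub h)
        have huN' : u ∉ N (G.deleteEdges {s(a,b)}) v := fun h => huS' (hN'v h)
        rcases N_diff huN huN' with ⟨hv1, hu1⟩ | ⟨hv1, hu1⟩
        · -- v = a, u = b ; after subst: a is v, b is u
          subst hv1; subst hu1
          have hNa : S ∪ N G v = S ∪ {u} := by
            apply le_antisymm
            · intro x hx
              rcases Finset.mem_union.mp hx with h | h
              · exact Finset.mem_union_left _ h
              · by_cases h' : x ∈ N (G.deleteEdges {s(v,u)}) v
                · exact Finset.mem_union_left _ (hsub (hN'v h'))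
                · rcases N_diff h h' with ⟨-, h2⟩ | ⟨h2, -⟩
                  · exact Finset.mem_union_right _ (by simp [h2])
                  · exact absurd h2 hne
            · exact Finset.union_subset Finset.subset_union_left
                (Finset.singleton_subset_iff.mpr
                  (Finset.mem_union_right _ (mem_N_of_adj hab)))
          have haS : v ∈ S := hsub (hN'v (self_mem_N _ v))
          rw [hNa] at heq
          have h3 : gameD (G.deleteEdges {s(v,u)}) (S ∪ {u}) = gameD G (S ∪ {u}) :=
            (eq_of_dominated _ _ (Finset.mem_union_left _ haS)
              (Finset.mem_union_right _ (by simp)) (le_refl _)).1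
          have h4 : gameD (G.deleteEdges {s(v,u)}) (S ∪ {u}) ≤
              gameD (G.deleteEdges {s(v,u)}) S' :=
            cont_D (hsub.trans Finset.subset_union_left)
          have h5 := gameD_le_gameS (G.deleteEdges {s(v,u)}) S'
          omega
        · -- v = b, u = a ; after subst: b is v, a is u
          subst hv1; subst hu1
          have hNb : S ∪ N G v = S ∪ {u} := by
            apply le_antisymm
            · intro x hx
              rcases Finset.mem_union.mp hx with h | h
              · exact Finset.mem_union_left _ h
              · by_cases h' : x ∈ N (G.deleteEdges {s(u,v)}) v
                · exact Finset.mem_union_left _ (hsub (hN'v h'))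
                · rcases N_diff h h' with ⟨h2, -⟩ | ⟨-, h2⟩
                  · exact absurd h2.symm hne
                  · exact Finset.mem_union_right _ (by simp [h2])
            · exact Finset.union_subset Finset.subset_union_left
                (Finset.singleton_subset_iff.mpr
                  (Finset.mem_union_right _ (mem_N_of_adj hab.symm)))
          have hbS : v ∈ S := hsub (hN'v (self_mem_N _ v))
          rw [hNb] at heq
          have h3 : gameD (G.deleteEdges {s(u,v)}) (S ∪ {u}) = gameD G (S ∪ {u}) :=
            (eq_of_dominated _ _ (Finset.mem_union_right _ (by simp))
              (Finset.mem_union_left _ hbS) (le_refl _)).1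
          have h4 : gameD (G.deleteEdges {s(u,v)}) (S ∪ {u}) ≤
              gameD (G.deleteEdges {s(u,v)}) S' :=
            cont_D (hsub.trans Finset.subset_union_left)
          have h5 := gameD_le_gameS (G.deleteEdges {s(u,v)}) S'
          omega

end DomGame
open DomGame in
/-- For any graph `G` and any edge `e` of `G`,
`|γ_g'(G) − γ_g'(G−e)| ≤ 2`. -/
theorem edge_removal_gameS {V : Type*} [Fintype V] (G : SimpleGraph V)
    (e : Sym2 V) (he : e ∈ G.edgeSet) :
    |(gammaG' G : ℤ) - gammaG' (G.deleteEdges {e})| ≤ 2 := by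
  induction e using Sym2.ind with
  | _ a b =>
    have hab : G.Adj a b := (SimpleGraph.mem_edgeSet G).mp he
    have hempty : ∀ x ∈ (∅ : Finset V) \ (∅ : Finset V), x = a ∨ x = b := by simp
    have h1 := (key1 hab (Finset.univ \ (∅ : Finset V)).card ∅ ∅ (le_refl _) hempty
      (by simp) (by simp) (le_refl _)).2
    have h2 := (key2 hab (Finset.univ \ (∅ : Finset V)).card ∅ ∅ (le_refl _) hempty
      (by simp) (by simp) (le_refl _)).2
    rw [abs_le]
    unfold gammaG' at *
    constructor <;> omega
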